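/- Let j, s, d, t be positive integers with s > dt and let F be a finite field with q elements. Suppose there exists a linear code C ⊆ F^{js} of length js and dimension j(s − dt), together with a surjective labeling L : [js] → [s] such that every nonzero codeword of C has labelweight at least dt + 1. Then there exists a block totally nonsingular matrix consisting of an (s − dt) × dt array of invertible j × j blocks over F. -/
import Mathlib


open Classical in
/-- The labelweight of a vector `c` with respect to a labeling `L`: the number of
distinct labels appearing on the support of `c`. -/
noncomputable def labelWeight {ι F : Type*} [Fintype ι] {s : ℕ} [Zero F]
    (L : ι → Fin s) (c : ι → F) : ℕ :=
  ((Finset.univ.filter fun i => c i ≠ 0).image L).card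

/-- A block matrix (an r × u array of j × j blocks) is block totally nonsingular if
every square sub-array of blocks is nonsingular. -/
def IsBlockTotallyNonsingular {F : Type*} [Field F] {r u j : ℕ}
    (A : Matrix (Fin r × Fin j) (Fin u × Fin j) F) : Prop :=
  ∀ (k : ℕ), 1 ≤ k → ∀ (ρ : Fin k → Fin r) (σ : Fin k → Fin u),
    Function.Injective ρ → Function.Injective σ →
      (Matrix.of fun p q : Fin k × Fin j => A (ρ p.1, p.2) (σ q.1, q.2)).det ≠ 0

/-- If there is a linear code C ⊆ F^{js} of dimension j(s − dt) with a
surjective labeling L : [js] → [s] under which every nonzero codeword has labelweight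
at least dt + 1, then there exists a block totally nonsingular (s − dt) × dt array of
invertible j × j blocks over F. -/
theorem stmt_5 {F : Type*} [Field F] [Fintype F] {q j s d t : ℕ}
    (hq : Fintype.card F = q)
    (hj : 0 < j) (hs : 0 < s) (hd : 0 < d) (ht : 0 < t) (hst : d * t < s)
    (C : Submodule F (Fin (j * s) → F))
    (hdim : Module.finrank F C = j * (s - d * t))
    (L : Fin (j * s) → Fin s) (hL : Function.Surjective L)
    (hwt : ∀ c ∈ C, c ≠ 0 → d * t + 1 ≤ labelWeight L c) :
    ∃ A : Matrix (Fin (s - d * t) × Fin j) (Fin (d * t) × Fin j) F,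
      IsBlockTotallyNonsingular A := by
  classical
  have hdts : d * t ≤ s := le_of_lt hst
  have hdt1 : 1 ≤ d * t := Nat.mul_pos hd ht
  -- fiber sizes
  set n : Fin s → ℕ := fun ℓ => (Finset.univ.filter fun i => L i = ℓ).card with hn
  have htot : ∑ ℓ, n ℓ = j * s := by
    have h := Finset.card_eq_sum_card_fiberwise
      (f := L) (s := (Finset.univ : Finset (Fin (j * s)))) (t := Finset.univ)
      (fun x _ => Finset.mem_univ (L x))
    simpa using h.symm
  -- any vector of C supported on labels in a small set is zero
  have hzero : ∀ Λ : Finset (Fin s), Λ.card ≤ d * t →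
      ∀ c ∈ C, (∀ i, L i ∉ Λ → c i = 0) → c = 0 := by
    intro Λ hΛ c hc hsupp
    by_contra hne
    have h1 := hwt c hc hne
    have h2 : ((Finset.univ.filter fun i => c i ≠ 0).image L) ⊆ Λ := by
      intro ℓ hℓ
      obtain ⟨i, hi, rfl⟩ := Finset.mem_image.mp hℓ
      have hci := (Finset.mem_filter.mp hi).2
      by_contra hnot
      exact hci (hsupp i hnot)
    have h3 : labelWeight L c ≤ Λ.card := Finset.card_le_card h2
    omega
  -- sum of fiber sizes over any dt-subset of labels is at most j*dt
  have hsumA : ∀ Λ : Finset (Fin s), Λ.card = d * t → ∑ ℓ ∈ Λ, n ℓ ≤ j * (d * t) := by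
    intro Λ hΛ
    set π : C →ₗ[F] ({ i : Fin (j * s) // L i ∉ Λ } → F) :=
      (LinearMap.funLeft F F (Subtype.val)).comp C.subtype with hπ
    have hπinj : Function.Injective π := by
      rw [← LinearMap.ker_eq_bot, LinearMap.ker_eq_bot']
      intro c hc
      have hc' : ∀ i, L i ∉ Λ → (c : Fin (j * s) → F) i = 0 := by
        intro i hi
        exact congrFun hc ⟨i, hi⟩
      exact Subtype.ext (hzero Λ (le_of_eq hΛ) c.val c.2 hc')
    have hle := LinearMap.finrank_le_finrank_of_injective hπinj
    rw [hdim, Module.finrank_fintype_fun_eq_card, Fintype.card_subtype] at hle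
    -- card of the filter of labels in Λ
    have hin : (Finset.univ.filter fun i : Fin (j * s) => L i ∈ Λ).card = ∑ ℓ ∈ Λ, n ℓ := by
      rw [Finset.card_eq_sum_card_fiberwise
        (f := L) (s := Finset.univ.filter fun i : Fin (j * s) => L i ∈ Λ) (t := Λ)
        (fun x hx => (Finset.mem_filter.mp hx).2)]
      refine Finset.sum_congr rfl fun ℓ hℓ => ?_
      congr 1
      rw [Finset.filter_filter]
      refine Finset.filter_congr fun i _ => ?_
      constructor
      · exact And.right
      · intro h; exact ⟨h ▸ hℓ, h⟩
    have hsplit := Finset.card_filter_add_card_filter_not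
      (s := (Finset.univ : Finset (Fin (j * s)))) (fun i : Fin (j * s) => L i ∈ Λ)
    have hcardU : (Finset.univ : Finset (Fin (j * s))).card = j * s := by simp
    have hmul : j * (s - d * t) = j * s - j * (d * t) := Nat.mul_sub j s (d * t)
    have hjs : j * (d * t) ≤ j * s := Nat.mul_le_mul_left j hdts
    omega
  -- every fiber has size exactly j
  have hfib : ∀ ℓ, n ℓ = j := by
    obtain ⟨S, hSmem, hSmax⟩ := Finset.exists_max_image
      ((Finset.univ : Finset (Fin s)).powersetCard (d * t)) (fun T => ∑ ℓ ∈ T, n ℓ)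
      (Finset.powersetCard_nonempty.mpr (by simpa using hdts))
    obtain ⟨-, hScard⟩ := Finset.mem_powersetCard.mp hSmem
    have hswap : ∀ ℓ ∉ S, ∀ ℓ' ∈ S, n ℓ ≤ n ℓ' := by
      intro ℓ hℓ ℓ' hℓ'
      have hnot : ℓ ∉ S.erase ℓ' := fun h => hℓ (Finset.mem_of_mem_erase h)
      have hins : (insert ℓ (S.erase ℓ')) ∈ (Finset.univ : Finset (Fin s)).powersetCard (d * t) := by
        rw [Finset.mem_powersetCard]
        refine ⟨Finset.subset_univ _, ?_⟩
        rw [Finset.card_insert_of_notMem hnot, Finset.card_erase_of_mem hℓ', hScard]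
        omega
      have h1 := hSmax _ hins
      rw [Finset.sum_insert hnot] at h1
      have h2 := Finset.add_sum_erase S n hℓ'
      simp only at h1 h2
      omega
    have hS := hsumA S hScard
    have hcompl := Finset.sum_add_sum_compl S n
    have hcardc : Sᶜ.card = s - d * t := by
      rw [Finset.card_compl, hScard]; simp
    have hmul : j * (d * t) + j * (s - d * t) = j * s := by
      rw [← Nat.mul_add]; congr 1; omega
    have hcne : Sᶜ.Nonempty := Finset.card_pos.mp (by rw [hcardc]; omega)
    have htotS : ∑ ℓ ∈ S, n ℓ + ∑ ℓ ∈ Sᶜ, n ℓ = j * s := by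
      rw [Finset.sum_add_sum_compl]; exact htot
    have hsumge : j * (s - d * t) ≤ ∑ ℓ ∈ Sᶜ, n ℓ := by omega
    have hconstc : ∑ _ℓ ∈ Sᶜ, j = j * (s - d * t) := by
      rw [Finset.sum_const, hcardc, smul_eq_mul, Nat.mul_comm]
    have hex : ∃ ℓ0 ∈ Sᶜ, j ≤ n ℓ0 :=
      Finset.exists_le_of_sum_le hcne (by rw [hconstc]; exact hsumge)
    obtain ⟨ℓ0, hℓ0c, hℓ0⟩ := hex
    have hℓ0S : ℓ0 ∉ S := Finset.mem_compl.mp hℓ0c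
    have hSge : ∀ ℓ' ∈ S, j ≤ n ℓ' := fun ℓ' h => le_trans hℓ0 (hswap ℓ0 hℓ0S ℓ' h)
    have hconstS : ∑ _ℓ ∈ S, j = j * (d * t) := by
      rw [Finset.sum_const, hScard, smul_eq_mul, Nat.mul_comm]
    have hSsum : ∑ _ℓ ∈ S, j = ∑ ℓ ∈ S, n ℓ :=
      le_antisymm (Finset.sum_le_sum hSge) (by rw [hconstS]; exact hS)
    have hSeq : ∀ ℓ' ∈ S, n ℓ' = j := by
      intro ℓ' h
      exact ((Finset.sum_eq_sum_iff_of_le hSge).mp hSsum ℓ' h).symm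
    have hSne : S.Nonempty := Finset.card_pos.mp (by omega)
    obtain ⟨ℓ1, hℓ1⟩ := hSne
    have hcle : ∀ ℓ ∈ Sᶜ, n ℓ ≤ j := by
      intro ℓ h
      have := hswap ℓ (Finset.mem_compl.mp h) ℓ1 hℓ1
      rw [hSeq ℓ1 hℓ1] at this
      exact this
    have hcsum : ∑ ℓ ∈ Sᶜ, n ℓ = ∑ _ℓ ∈ Sᶜ, j :=
      le_antisymm (Finset.sum_le_sum hcle) (by rw [hconstc]; exact hsumge)
    have hceq : ∀ ℓ ∈ Sᶜ, n ℓ = j := (Finset.sum_eq_sum_iff_of_le hcle).mp hcsum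
    intro ℓ
    by_cases h : ℓ ∈ S
    · exact hSeq ℓ h
    · exact hceq ℓ (Finset.mem_compl.mpr h)
  -- the coordinate equivalence
  have hfib' : ∀ ℓ : Fin s, Fintype.card {i // L i = ℓ} = j := fun ℓ => by
    rw [Fintype.card_subtype]; exact hfib ℓ
  let eFib : ∀ ℓ : Fin s, {i // L i = ℓ} ≃ Fin j := fun ℓ => Fintype.equivFinOfCardEq (hfib' ℓ)
  let e : Fin (j * s) ≃ Fin s × Fin j :=
    ((Equiv.sigmaFiberEquiv L).symm.trans (Equiv.sigmaCongrRight eFib)).trans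
      (Equiv.sigmaEquivProd (Fin s) (Fin j))
  have he : ∀ i, (e i).1 = L i := fun i => rfl
  have hms : (s - d * t) + d * t = s := by omega
  let g : Fin (s - d * t) ⊕ Fin (d * t) ≃ Fin s := finSumFinEquiv.trans (finCongr hms)
  -- the systematic projection
  let π : C →ₗ[F] (Fin (s - d * t) × Fin j → F) :=
    (LinearMap.funLeft F F (fun x : Fin (s - d * t) × Fin j =>
      e.symm (g (Sum.inl x.1), x.2))).comp C.subtype
  have hπ : ∀ (c : C) x, π c x = (c : Fin (j * s) → F) (e.symm (g (Sum.inl x.1), x.2)) :=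
    fun c x => rfl
  have hπinj : Function.Injective π := by
    rw [← LinearMap.ker_eq_bot, LinearMap.ker_eq_bot']
    intro c hc
    have hc' : ∀ x : Fin (s - d * t) × Fin j,
        (c : Fin (j * s) → F) (e.symm (g (Sum.inl x.1), x.2)) = 0 := fun x => congrFun hc x
    refine Subtype.ext (hzero (Finset.univ.image fun k : Fin (d * t) => g (Sum.inr k))
      (le_trans Finset.card_image_le (by simp)) c.val c.2 ?_)
    intro i hi
    rcases hcase : g.symm (L i) with a | k
    · have hgl : g (Sum.inl a) = L i := by rw [← hcase, Equiv.apply_symm_apply]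
      have hei : (L i, (e i).2) = e i := by rw [← he i]
      have hieq : i = e.symm (g (Sum.inl a), (e i).2) := by
        rw [hgl, hei, Equiv.symm_apply_apply]
      rw [hieq]
      exact hc' (a, (e i).2)
    · exfalso
      apply hi
      refine Finset.mem_image.mpr ⟨k, Finset.mem_univ _, ?_⟩
      rw [← hcase, Equiv.apply_symm_apply]
  have hrank : Module.finrank F C = Module.finrank F (Fin (s - d * t) × Fin j → F) := by
    rw [hdim, Module.finrank_fintype_fun_eq_card, Fintype.card_prod, Fintype.card_fin,
      Fintype.card_fin, Nat.mul_comm]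
  have hπbij : Function.Bijective π :=
    ⟨hπinj, (LinearMap.injective_iff_surjective_of_finrank_eq_finrank hrank).mp hπinj⟩
  let E : C ≃ₗ[F] (Fin (s - d * t) × Fin j → F) := LinearEquiv.ofBijective π hπbij
  have hE : ∀ c : C, E c = π c := fun c => rfl
  let A : Matrix (Fin (s - d * t) × Fin j) (Fin (d * t) × Fin j) F :=
    Matrix.of fun x y =>
      ((E.symm (Pi.single x 1) : C) : Fin (j * s) → F) (e.symm (g (Sum.inr y.1), y.2))
  -- systematic coordinates of E.symm w
  have hSys : ∀ (w : Fin (s - d * t) × Fin j → F) (x : Fin (s - d * t) × Fin j),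
      ((E.symm w : C) : Fin (j * s) → F) (e.symm (g (Sum.inl x.1), x.2)) = w x := by
    intro w x
    have h1 : π (E.symm w) = w := E.apply_symm_apply w
    exact congrFun h1 x
  -- parity coordinates of E.symm w
  have hAval : ∀ (w : Fin (s - d * t) × Fin j → F) (y : Fin (d * t) × Fin j),
      ((E.symm w : C) : Fin (j * s) → F) (e.symm (g (Sum.inr y.1), y.2)) = ∑ x, w x * A x y := by
    intro w y
    have hw : ∑ x, w x • (Pi.single x 1 : Fin (s - d * t) × Fin j → F) = w := by
      funext z
      rw [Finset.sum_apply]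
      simp [Pi.single_apply]
    calc ((E.symm w : C) : Fin (j * s) → F) (e.symm (g (Sum.inr y.1), y.2))
        = ((E.symm (∑ x, w x • (Pi.single x 1 : Fin (s - d * t) × Fin j → F)) : C)
            : Fin (j * s) → F) (e.symm (g (Sum.inr y.1), y.2)) := by rw [hw]
      _ = ∑ x, w x * A x y := by
          rw [map_sum]
          simp only [map_smul]
          rw [AddSubmonoidClass.coe_finset_sum, Finset.sum_apply]
          refine Finset.sum_congr rfl fun x _ => ?_
          simp [A, smul_eq_mul]
  refine ⟨A, ?_⟩
  intro κ hκ ρ σ hρ hσ hdet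
  set M := Matrix.of fun p q : Fin κ × Fin j => A (ρ p.1, p.2) (σ q.1, q.2) with hM
  obtain ⟨v, hv0, hvM⟩ := Matrix.exists_vecMul_eq_zero_iff.mpr hdet
  -- the systematic pattern
  set w : Fin (s - d * t) × Fin j → F :=
    fun x => ∑ p : Fin κ, if ρ p = x.1 then v (p, x.2) else 0 with hwdef
  have hwρ : ∀ (p : Fin κ) (b : Fin j), w (ρ p, b) = v (p, b) := by
    intro p b
    rw [hwdef]
    simp only
    rw [Finset.sum_eq_single p]
    · simp
    · intro p' _ hne
      rw [if_neg (fun h => hne (hρ h))]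
    · intro h
      exact absurd (Finset.mem_univ p) h
  have hw0 : ∀ a b, (¬ ∃ p, ρ p = a) → w (a, b) = 0 := by
    intro a b ha
    refine Finset.sum_eq_zero fun p _ => ?_
    rw [if_neg (fun h => ha ⟨p, h⟩)]
  set c : C := E.symm w with hcdef
  have hcne : (c : Fin (j * s) → F) ≠ 0 := by
    obtain ⟨x, hx⟩ := Function.ne_iff.mp hv0
    intro h0
    apply hx
    have h1 := hSys w (ρ x.1, x.2)
    rw [← hcdef, h0] at h1
    rw [← hwρ x.1 x.2, ← h1]
    rfl
  -- vanishing on σ-columns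
  have hmapinj : ∀ x ∈ (Finset.univ : Finset (Fin κ × Fin j)),
      ∀ y ∈ (Finset.univ : Finset (Fin κ × Fin j)),
      (fun z : Fin κ × Fin j => ((ρ z.1, z.2) : Fin (s - d * t) × Fin j)) x
        = (fun z : Fin κ × Fin j => ((ρ z.1, z.2) : Fin (s - d * t) × Fin j)) y → x = y := by
    intro x _ y _ hxy
    simp only [Prod.mk.injEq] at hxy
    exact Prod.ext (hρ hxy.1) hxy.2
  have hcσ : ∀ (q0 : Fin κ) (qb : Fin j),
      (c : Fin (j * s) → F) (e.symm (g (Sum.inr (σ q0)), qb)) = 0 := by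
    intro q0 qb
    rw [hcdef, hAval w (σ q0, qb)]
    have hsub : (Finset.univ.image fun z : Fin κ × Fin j =>
        ((ρ z.1, z.2) : Fin (s - d * t) × Fin j)) ⊆ Finset.univ := Finset.subset_univ _
    have hvanish : ∀ x ∈ (Finset.univ : Finset (Fin (s - d * t) × Fin j)),
        x ∉ (Finset.univ.image fun z : Fin κ × Fin j =>
          ((ρ z.1, z.2) : Fin (s - d * t) × Fin j)) → w x * A x (σ q0, qb) = 0 := by
      intro x _ hx
      have : ¬ ∃ p, ρ p = x.1 := by
        rintro ⟨p, hp⟩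
        exact hx (Finset.mem_image.mpr ⟨(p, x.2), Finset.mem_univ _, by rw [hp]⟩)
      rw [show x = (x.1, x.2) from rfl, hw0 x.1 x.2 this, zero_mul]
    rw [← Finset.sum_subset hsub hvanish, Finset.sum_image hmapinj]
    have : ∀ z : Fin κ × Fin j,
        w (ρ z.1, z.2) * A (ρ z.1, z.2) (σ q0, qb) = v z * M z (q0, qb) := by
      intro z
      rw [hwρ z.1 z.2]
      rfl
    rw [Finset.sum_congr rfl fun z _ => this z]
    have := congrFun hvM (q0, qb)
    simpa [Matrix.vecMul, dotProduct] using this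
  -- bounding the labelweight
  have hsub : ((Finset.univ.filter fun i => (c : Fin (j * s) → F) i ≠ 0).image L) ⊆
      (Finset.univ.image fun p : Fin κ => g (Sum.inl (ρ p))) ∪
        ((Finset.univ.image σ)ᶜ.image fun k => g (Sum.inr k)) := by
    intro ℓ hℓ
    obtain ⟨i, hi, rfl⟩ := Finset.mem_image.mp hℓ
    have hci := (Finset.mem_filter.mp hi).2
    have hei : (L i, (e i).2) = e i := by rw [← he i]
    rcases hcase : g.symm (L i) with a | k
    · have hgl : g (Sum.inl a) = L i := by rw [← hcase, Equiv.apply_symm_apply]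
      have hieq : i = e.symm (g (Sum.inl a), (e i).2) := by
        rw [hgl, hei, Equiv.symm_apply_apply]
      have hwa : w (a, (e i).2) ≠ 0 := by
        rw [← hSys w (a, (e i).2), ← hcdef, ← hieq]
        exact hci
      have hex : ∃ p, ρ p = a := by
        by_contra h
        exact hwa (hw0 a _ h)
      obtain ⟨p, rfl⟩ := hex
      exact Finset.mem_union_left _ (Finset.mem_image.mpr ⟨p, Finset.mem_univ _, hgl⟩)
    · have hgl : g (Sum.inr k) = L i := by rw [← hcase, Equiv.apply_symm_apply]
      have hieq : i = e.symm (g (Sum.inr k), (e i).2) := by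
        rw [hgl, hei, Equiv.symm_apply_apply]
      have hk : k ∉ Finset.univ.image σ := by
        intro hkmem
        obtain ⟨q0, _, rfl⟩ := Finset.mem_image.mp hkmem
        apply hci
        rw [hieq]
        exact hcσ q0 (e i).2
      exact Finset.mem_union_right _
        (Finset.mem_image.mpr ⟨k, Finset.mem_compl.mpr hk, hgl⟩)
  have hκdt : κ ≤ d * t := by simpa using Fintype.card_le_of_injective σ hσ
  have h1 : (Finset.univ.image fun p : Fin κ => g (Sum.inl (ρ p))).card ≤ κ :=
    le_trans Finset.card_image_le (by simp)
  have h2 : (((Finset.univ.image σ)ᶜ).image fun k : Fin (d * t) => g (Sum.inr k)).card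
      ≤ d * t - κ := by
    refine le_trans Finset.card_image_le ?_
    rw [Finset.card_compl, Finset.card_image_of_injective _ hσ]
    simp
  have hcard : labelWeight L (c : Fin (j * s) → F) ≤ d * t := by
    have h3 := Finset.card_le_card hsub
    have h4 := Finset.card_union_le
      (Finset.univ.image fun p : Fin κ => g (Sum.inl (ρ p)))
      ((Finset.univ.image σ)ᶜ.image fun k => g (Sum.inr k))
    have h5 : labelWeight L (c : Fin (j * s) → F)
        = ((Finset.univ.filter fun i => (c : Fin (j * s) → F) i ≠ 0).image L).card := rfl
    omega
  have := hwt (c : Fin (j * s) → F) c.2 hcne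
  omega
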